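/- arXiv:1307.4724 — 2 statements merged into one kernel-verified Lean document; each statement's English description precedes it below -/
import Mathlib

section
/- Let G and H be finite connected nontrivial simple graphs, let u,x be vertices of G and v,y vertices of H. Then (u,v) and (x,y) are mutually maximally distant in the strong product G ⊠ H if and only if one of the following holds: (i) u,x are mutually maximally distant in G and v,y are mutually maximally distant in H; (ii) u,x are mutually maximally distant in G and v = y; (iii) v,y are mutually maximally distant in H and u = x; (iv) u,x are mutually maximally distant in G and d_G(u,x) > d_H(v,y); (v) v,y are mutually maximally distant in H and d_G(u,x) < d_H(v,y). -/
open SimpleGraph Finset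

variable {α β : Type*}

/-- The strong product of two simple graphs: distinct vertices `(a,b)` and `(c,d)` are adjacent
iff (`a = c` or `a ~ c`) and (`b = d` or `b ~ d`). -/
def strongProd (G : SimpleGraph α) (H : SimpleGraph β) : SimpleGraph (α × β) where
  Adj x y := x ≠ y ∧ (x.1 = y.1 ∨ G.Adj x.1 y.1) ∧ (x.2 = y.2 ∨ H.Adj x.2 y.2)
  symm := ⟨by
    rintro x y ⟨h1, h2, h3⟩
    exact ⟨h1.symm, h2.imp Eq.symm (fun a => a.symm), h3.imp Eq.symm (fun a => a.symm)⟩⟩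
  loopless := ⟨fun x h => h.1 rfl⟩

/-- The Cartesian sum (disjunctive product) of two simple graphs. -/
def cartSum (G : SimpleGraph α) (H : SimpleGraph β) : SimpleGraph (α × β) where
  Adj x y := x ≠ y ∧ (G.Adj x.1 y.1 ∨ H.Adj x.2 y.2)
  symm := ⟨by
    rintro x y ⟨h1, h2⟩
    exact ⟨h1.symm, h2.imp (fun a => a.symm) (fun a => a.symm)⟩⟩
  loopless := ⟨fun x h => h.1 rfl⟩

/-- `u` is maximally distant from `v` in `G`. -/
def MaximallyDistantFrom (G : SimpleGraph α) (u v : α) : Prop :=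
  ∀ w, G.Adj u w → G.dist v w ≤ G.dist u v

/-- `u` and `v` are mutually maximally distant in `G`. -/
def MutuallyMaximallyDistant (G : SimpleGraph α) (u v : α) : Prop :=
  MaximallyDistantFrom G u v ∧ MaximallyDistantFrom G v u

/-- The strong resolving graph of `G`. -/
def strongResolvingGraph (G : SimpleGraph α) : SimpleGraph α where
  Adj u v := u ≠ v ∧ MutuallyMaximallyDistant G u v
  symm := ⟨by rintro u v ⟨h1, h2, h3⟩; exact ⟨h1.symm, h3, h2⟩⟩
  loopless := ⟨fun x h => h.1 rfl⟩

/-- A finset of vertices is independent if no two of its (distinct) members are adjacent. -/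
def IsIndepFinset (G : SimpleGraph α) (s : Finset α) : Prop :=
  ∀ u ∈ s, ∀ v ∈ s, u ≠ v → ¬ G.Adj u v

/-- The independence number `β(G)`. -/
noncomputable def indepNum (G : SimpleGraph α) [Fintype α] : ℕ :=
  sSup {n | ∃ s : Finset α, IsIndepFinset G s ∧ s.card = n}

/-- `w` strongly resolves `u` and `v` in `G`. -/
def StronglyResolves (G : SimpleGraph α) (w u v : α) : Prop :=
  G.dist w u = G.dist w v + G.dist v u ∨ G.dist w v = G.dist w u + G.dist u v

/-- A strong metric generator for `G`. -/
def IsStrongMetricGenerator (G : SimpleGraph α) (s : Finset α) : Prop :=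
  ∀ u v : α, u ≠ v → ∃ w ∈ s, StronglyResolves G w u v

/-- The strong metric dimension of `G`. -/
noncomputable def sdim (G : SimpleGraph α) [Fintype α] : ℕ :=
  sInf {n | ∃ s : Finset α, IsStrongMetricGenerator G s ∧ s.card = n}

section StrongProdAux

variable {G : SimpleGraph α} {H : SimpleGraph β}

lemma exists_strongProd_walk_left (a : α) {v y : β} (w2 : H.Walk v y) :
    ∃ p : (strongProd G H).Walk (a, v) (a, y), p.length = w2.length := by
  induction w2 with
  | nil => exact ⟨.nil, rfl⟩
  | @cons d e f h2 w ih =>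
    obtain ⟨p, hp⟩ := ih
    refine ⟨.cons (show (strongProd G H).Adj (a, d) (a, e) from
      ⟨by simp [Prod.ext_iff, h2.ne], Or.inl rfl, Or.inr h2⟩) p, ?_⟩
    simp [hp]

lemma exists_strongProd_walk_right {u x : α} (w1 : G.Walk u x) (b : β) :
    ∃ p : (strongProd G H).Walk (u, b) (x, b), p.length = w1.length := by
  induction w1 with
  | nil => exact ⟨.nil, rfl⟩
  | @cons d e f h2 w ih =>
    obtain ⟨p, hp⟩ := ih
    refine ⟨.cons (show (strongProd G H).Adj (d, b) (e, b) from
      ⟨by simp [Prod.ext_iff, h2.ne], Or.inr h2, Or.inl rfl⟩) p, ?_⟩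
    simp [hp]

lemma exists_strongProd_walk : ∀ {u x : α} {v y : β} (w1 : G.Walk u x) (w2 : H.Walk v y),
    ∃ p : (strongProd G H).Walk (u, v) (x, y), p.length = max w1.length w2.length := by
  intro u x v y w1 w2
  induction w1 generalizing v w2 with
  | nil =>
    obtain ⟨p, hp⟩ := exists_strongProd_walk_left (G := G) _ w2
    exact ⟨p, by simp [hp]⟩
  | @cons a m c h w ih =>
    cases w2 with
    | nil =>
      obtain ⟨p, hp⟩ := exists_strongProd_walk_right (H := H) (SimpleGraph.Walk.cons h w) y
      exact ⟨p, by simp [hp]⟩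
    | cons h2 w2' =>
      obtain ⟨p, hp⟩ := ih w2'
      rename_i e
      refine ⟨.cons (show (strongProd G H).Adj (a, v) (m, e) from
        ⟨by simp [Prod.ext_iff, h.ne], Or.inr h, Or.inr h2⟩) p, ?_⟩
      simp [hp]

lemma strongProd_walk_proj (hG : G.Connected) (hH : H.Connected) :
    ∀ {p q : α × β} (w : (strongProd G H).Walk p q),
    G.dist p.1 q.1 ≤ w.length ∧ H.dist p.2 q.2 ≤ w.length := by
  intro p q w
  induction w with
  | nil => simp
  | @cons p m q h w ih =>
    have h1 : G.dist p.1 m.1 ≤ 1 := by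
      rcases h.2.1 with he | ha
      · rw [he, SimpleGraph.dist_self]; omega
      · exact SimpleGraph.dist_le (SimpleGraph.Walk.cons ha .nil)
    have h2 : H.dist p.2 m.2 ≤ 1 := by
      rcases h.2.2 with he | ha
      · rw [he, SimpleGraph.dist_self]; omega
      · exact SimpleGraph.dist_le (SimpleGraph.Walk.cons ha .nil)
    have t1 := hG.dist_triangle (u := p.1) (v := m.1) (w := q.1)
    have t2 := hH.dist_triangle (u := p.2) (v := m.2) (w := q.2)
    simp only [SimpleGraph.Walk.length_cons]
    omega

lemma strongProd_dist (hG : G.Connected) (hH : H.Connected) (u x : α) (v y : β) :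
    (strongProd G H).dist (u, v) (x, y) = max (G.dist u x) (H.dist v y) := by
  obtain ⟨w1, hw1⟩ := hG.exists_walk_length_eq_dist u x
  obtain ⟨w2, hw2⟩ := hH.exists_walk_length_eq_dist v y
  obtain ⟨p, hp⟩ := exists_strongProd_walk w1 w2
  have hle : (strongProd G H).dist (u, v) (x, y) ≤ max (G.dist u x) (H.dist v y) := by
    calc (strongProd G H).dist (u, v) (x, y) ≤ p.length := SimpleGraph.dist_le p
    _ = _ := by rw [hp, hw1, hw2]
  obtain ⟨q, hq⟩ := (SimpleGraph.Reachable.exists_walk_length_eq_dist ⟨p⟩ :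
    ∃ q : (strongProd G H).Walk (u, v) (x, y), q.length = _)
  have hproj := strongProd_walk_proj hG hH q
  simp only [hq] at hproj
  omega

lemma exists_adj_of_connected (hG : G.Connected) (hGn : Nontrivial α) (u : α) :
    ∃ w, G.Adj u w := by
  obtain ⟨t, ht⟩ := exists_ne u
  obtain ⟨p⟩ := hG u t
  cases p with
  | nil => exact absurd rfl ht.symm
  | cons h _ => exact ⟨_, h⟩

lemma not_mmd_self (hG : G.Connected) (hGn : Nontrivial α) (u : α) :
    ¬ MutuallyMaximallyDistant G u u := by
  rintro ⟨h, -⟩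
  obtain ⟨w, hw⟩ := exists_adj_of_connected hG hGn u
  have := h w hw
  rw [SimpleGraph.dist_self] at this
  have h0 : G.dist u w = 0 := Nat.le_zero.mp this
  exact hw.ne (hG.dist_eq_zero_iff.mp h0)

lemma md_strongProd_iff (hG : G.Connected) (hH : H.Connected)
    (u x : α) (v y : β) :
    MaximallyDistantFrom (strongProd G H) (u, v) (x, y) ↔
      (H.dist v y ≤ G.dist u x → MaximallyDistantFrom G u x) ∧
      (G.dist u x ≤ H.dist v y → MaximallyDistantFrom H v y) := by
  constructor
  · intro h
    constructor
    · intro hba w hw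
      have := h (w, v) ⟨by simp [Prod.ext_iff, hw.ne], Or.inr hw, Or.inl rfl⟩
      rw [strongProd_dist hG hH, strongProd_dist hG hH] at this
      have h1 : G.dist x w ≤ max (G.dist x w) (H.dist y v) := le_max_left _ _
      have h2 : max (G.dist u x) (H.dist v y) = G.dist u x := max_eq_left hba
      omega
    · intro hab z hz
      have := h (u, z) ⟨by simp [Prod.ext_iff, hz.ne], Or.inl rfl, Or.inr hz⟩
      rw [strongProd_dist hG hH, strongProd_dist hG hH] at this
      have h1 : H.dist y z ≤ max (G.dist x u) (H.dist y z) := le_max_right _ _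
      have h2 : max (G.dist u x) (H.dist v y) = H.dist v y := max_eq_right hab
      omega
  · rintro ⟨h1, h2⟩ ⟨w, z⟩ hwz
    rw [strongProd_dist hG hH, strongProd_dist hG hH]
    have hxw : G.dist x w ≤ max (G.dist u x) (H.dist v y) := by
      rcases hwz.2.1 with he | ha
      · have he' : u = w := he
        rw [← he', SimpleGraph.dist_comm]; exact le_max_left _ _
      · rcases le_or_gt (H.dist v y) (G.dist u x) with hc | hc
        · exact le_trans (h1 hc w ha) (le_max_left _ _)
        · have t : G.dist x w ≤ G.dist x u + G.dist u w := hG.dist_triangle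
          have huw : G.dist u w ≤ 1 := SimpleGraph.dist_le (SimpleGraph.Walk.cons ha .nil)
          have hxu : G.dist x u = G.dist u x := SimpleGraph.dist_comm
          have : G.dist x w ≤ H.dist v y := by omega
          exact le_trans this (le_max_right _ _)
    have hyz : H.dist y z ≤ max (G.dist u x) (H.dist v y) := by
      rcases hwz.2.2 with he | ha
      · have he' : v = z := he
        rw [← he', SimpleGraph.dist_comm]; exact le_max_right _ _
      · rcases le_or_gt (G.dist u x) (H.dist v y) with hc | hc
        · exact le_trans (h2 hc z ha) (le_max_right _ _)
        · have t : H.dist y z ≤ H.dist y v + H.dist v z := hH.dist_triangle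
          have hvz : H.dist v z ≤ 1 := SimpleGraph.dist_le (SimpleGraph.Walk.cons ha .nil)
          have hyv : H.dist y v = H.dist v y := SimpleGraph.dist_comm
          have : H.dist y z ≤ G.dist u x := by omega
          exact le_trans this (le_max_left _ _)
    exact max_le hxw hyz

end StrongProdAux

theorem mutuallyMaximallyDistant_strongProd_iff [Fintype α] [Fintype β]
    (G : SimpleGraph α) (H : SimpleGraph β)
    (hG : G.Connected) (hGn : Nontrivial α) (hH : H.Connected) (hHn : Nontrivial β)
    (u x : α) (v y : β) :
    MutuallyMaximallyDistant (strongProd G H) (u, v) (x, y) ↔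
      (MutuallyMaximallyDistant G u x ∧ MutuallyMaximallyDistant H v y) ∨
      (MutuallyMaximallyDistant G u x ∧ v = y) ∨
      (MutuallyMaximallyDistant H v y ∧ u = x) ∨
      (MutuallyMaximallyDistant G u x ∧ H.dist v y < G.dist u x) ∨
      (MutuallyMaximallyDistant H v y ∧ G.dist u x < H.dist v y) := by
  have hcg : G.dist x u = G.dist u x := SimpleGraph.dist_comm
  have hch : H.dist y v = H.dist v y := SimpleGraph.dist_comm
  rw [MutuallyMaximallyDistant, md_strongProd_iff hG hH, md_strongProd_iff hG hH, hcg, hch]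
  constructor
  · rintro ⟨⟨h1, h2⟩, ⟨h3, h4⟩⟩
    rcases lt_trichotomy (G.dist u x) (H.dist v y) with h | h | h
    · exact Or.inr (Or.inr (Or.inr (Or.inr ⟨⟨h2 h.le, h4 h.le⟩, h⟩)))
    · exact Or.inl ⟨⟨h1 h.ge, h3 h.ge⟩, ⟨h2 h.le, h4 h.le⟩⟩
    · exact Or.inr (Or.inr (Or.inr (Or.inl ⟨⟨h1 h.le, h3 h.le⟩, h⟩)))
  · rintro (⟨⟨hg1, hg2⟩, ⟨hh1, hh2⟩⟩ | ⟨⟨hg1, hg2⟩, rfl⟩ | ⟨⟨hh1, hh2⟩, rfl⟩ |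
      ⟨⟨hg1, hg2⟩, hlt⟩ | ⟨⟨hh1, hh2⟩, hlt⟩)
    · exact ⟨⟨fun _ => hg1, fun _ => hh1⟩, ⟨fun _ => hg2, fun _ => hh2⟩⟩
    · have hb : H.dist v v = 0 := SimpleGraph.dist_self
      have hane : G.dist u x ≠ 0 := fun h0 =>
        not_mmd_self hG hGn x ((hG.dist_eq_zero_iff.mp h0) ▸ (⟨hg1, hg2⟩ : MutuallyMaximallyDistant G u x))
      exact ⟨⟨fun _ => hg1, fun h => absurd h (by omega)⟩,
             ⟨fun _ => hg2, fun h => absurd h (by omega)⟩⟩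
    · have ha : G.dist u u = 0 := SimpleGraph.dist_self
      have hbne : H.dist v y ≠ 0 := fun h0 =>
        not_mmd_self hH hHn y ((hH.dist_eq_zero_iff.mp h0) ▸ (⟨hh1, hh2⟩ : MutuallyMaximallyDistant H v y))
      exact ⟨⟨fun h => absurd h (by omega), fun _ => hh1⟩,
             ⟨fun h => absurd h (by omega), fun _ => hh2⟩⟩
    · exact ⟨⟨fun _ => hg1, fun h => absurd h (by omega)⟩,
             ⟨fun _ => hg2, fun h => absurd h (by omega)⟩⟩
    · exact ⟨⟨fun h => absurd h (by omega), fun _ => hh1⟩,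
             ⟨fun h => absurd h (by omega), fun _ => hh2⟩⟩
end

section
/- Let G be a complete k-partite graph K_{p₁,p₂,...,p_k} of order n₁ = p₁ + ⋯ + p_k with k ≥ 2, in which at most one part has size 1 (all but at most one p_i satisfy p_i ≥ 2), and let H be a finite connected nontrivial simple graph of order n₂. Then dim_s(G ⊠ H) = n₂(n₁ − k) + n₁ · dim_s(H) − (n₁ − k) · dim_s(H). -/
open SimpleGraph Finset

variable {α β : Type*}

section General

variable {V : Type*} {G : SimpleGraph V}

lemma univ_generator [Fintype V] (G : SimpleGraph V) :
    IsStrongMetricGenerator G Finset.univ := by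
  intro u v huv
  exact ⟨v, Finset.mem_univ v, Or.inl (by simp [SimpleGraph.dist_self])⟩

lemma sdim_le [Fintype V] {s : Finset V} (h : IsStrongMetricGenerator G s) :
    sdim G ≤ s.card :=
  Nat.sInf_le ⟨s, h, rfl⟩

lemma exists_min_generator [Fintype V] (G : SimpleGraph V) :
    ∃ s : Finset V, IsStrongMetricGenerator G s ∧ s.card = sdim G := by
  have h : sdim G ∈ {n | ∃ s : Finset V, IsStrongMetricGenerator G s ∧ s.card = n} :=
    Nat.sInf_mem ⟨Finset.univ.card, Finset.univ, univ_generator G, rfl⟩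
  exact h

lemma dist_commG (G : SimpleGraph V) (a b : V) : G.dist a b = G.dist b a :=
  SimpleGraph.dist_comm

lemma exists_adj_dist (hG : G.Connected) {u v : V} (h : u ≠ v) :
    ∃ u', G.Adj u u' ∧ G.dist u' v + 1 = G.dist u v := by
  obtain ⟨p, hp⟩ := hG.exists_walk_length_eq_dist u v
  cases p with
  | nil => exact absurd rfl h
  | @cons _ x _ ha q =>
    refine ⟨x, ha, ?_⟩
    have h1 : G.dist x v ≤ q.length := SimpleGraph.dist_le q
    have h2 : G.dist u v ≤ G.dist u x + G.dist x v := hG.dist_triangle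
    have h3 : G.dist u x ≤ 1 := by
      rw [← SimpleGraph.dist_eq_one_iff_adj] at ha; omega
    simp only [SimpleGraph.Walk.length_cons] at hp
    omega

lemma dist_lt_card [Fintype V] (hG : G.Connected) (u v : V) :
    G.dist u v < Fintype.card V := by
  obtain ⟨p, hp⟩ := hG.exists_walk_length_eq_dist u v
  have := (SimpleGraph.Walk.isPath_of_length_eq_dist p hp).length_lt
  omega

lemma exists_mdf [Fintype V] (hG : G.Connected) (v : V) (u : V) :
    ∃ w, G.dist v w = G.dist v u + G.dist u w ∧ MaximallyDistantFrom G w v := by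
  suffices h : ∀ n u, Fintype.card V ≤ G.dist v u + n →
      ∃ w, G.dist v w = G.dist v u + G.dist u w ∧ MaximallyDistantFrom G w v by
    exact h (Fintype.card V) u (by omega)
  intro n
  induction n with
  | zero => intro u hu; exact absurd (dist_lt_card hG v u) (by omega)
  | succ n ih =>
    intro u hu
    by_cases hm : MaximallyDistantFrom G u v
    · exact ⟨u, by simp [SimpleGraph.dist_self], hm⟩
    · simp only [MaximallyDistantFrom, not_forall] at hm
      obtain ⟨u', ha, hd⟩ := hm
      have hd' : G.dist v u' = G.dist v u + 1 := by
        have h1 : G.dist v u' ≤ G.dist v u + G.dist u u' := hG.dist_triangle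
        have h2 : G.dist u u' ≤ 1 := by
          rw [← SimpleGraph.dist_eq_one_iff_adj] at ha; omega
        rw [dist_commG G u v] at hd
        omega
      obtain ⟨w, hw1, hw2⟩ := ih u' (by omega)
      refine ⟨w, ?_, hw2⟩
      have h1 : G.dist v w ≤ G.dist v u + G.dist u w := hG.dist_triangle
      have h2 : G.dist u w ≤ G.dist u u' + G.dist u' w := hG.dist_triangle
      have h3 : G.dist u u' ≤ 1 := by
        rw [← SimpleGraph.dist_eq_one_iff_adj] at ha; omega
      omega

lemma mdf_extend (hG : G.Connected) {u v v' : V} (h : MaximallyDistantFrom G u v)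
    (hd : G.dist u v' = G.dist u v + G.dist v v') : MaximallyDistantFrom G u v' := by
  intro w hw
  have h1 : G.dist v' w ≤ G.dist v' v + G.dist v w := hG.dist_triangle
  have h2 : G.dist v w ≤ G.dist u v := h w hw
  have h3 : G.dist v' v = G.dist v v' := dist_commG G _ _
  rw [dist_commG G u v'] at hd ⊢
  omega

lemma cover_generator [Fintype V] (hG : G.Connected) (C : Finset V)
    (hC : ∀ u v : V, u ≠ v → MutuallyMaximallyDistant G u v → u ∈ C ∨ v ∈ C) :
    IsStrongMetricGenerator G C := by
  intro u v huv
  obtain ⟨u', hu1, hu2⟩ := exists_mdf hG v u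
  obtain ⟨v', hv1, hv2⟩ := exists_mdf hG u' v
  have hu2' : MaximallyDistantFrom G u' v' :=
    mdf_extend hG hu2 hv1
  have hne : u' ≠ v' := by
    intro he
    rw [← he, SimpleGraph.dist_self] at hv1
    have h0 : u' = v := (hG.dist_eq_zero_iff).mp (by omega)
    rw [h0, dist_commG G v v, SimpleGraph.dist_self] at hu1
    have h1 : G.dist v u = 0 := by omega
    exact huv ((hG.dist_eq_zero_iff).mp h1).symm
  rcases hC u' v' hne ⟨hu2', hv2⟩ with h | h
  · refine ⟨u', h, Or.inr ?_⟩
    have e1 : G.dist u' v = G.dist v u' := dist_commG G _ _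
    have e2 : G.dist u' u = G.dist u u' := dist_commG G _ _
    have e3 : G.dist u v = G.dist v u := dist_commG G _ _
    omega
  · refine ⟨v', h, Or.inl ?_⟩
    -- dist v' u = dist v' v + dist v u
    have h1 : G.dist u' v' ≤ G.dist u' u + G.dist u v' := hG.dist_triangle
    have h2 : G.dist u v' ≤ G.dist u v + G.dist v v' := hG.dist_triangle
    have h3 : G.dist u' u = G.dist u u' := dist_commG G _ _
    have h4 : G.dist v' u = G.dist u v' := dist_commG G _ _
    have h5 : G.dist v' v = G.dist v v' := dist_commG G _ _
    have h6 : G.dist v u = G.dist u v := dist_commG G _ _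
    have h7 : G.dist v u' = G.dist u' v := dist_commG G _ _
    omega

lemma resolver_of_mmd (hG : G.Connected) {u v w : V}
    (hm : MutuallyMaximallyDistant G u v) (hr : StronglyResolves G w u v) :
    w = u ∨ w = v := by
  rcases hr with hr | hr
  · right
    by_contra hwv
    obtain ⟨x, hx, hdx⟩ := exists_adj_dist hG (Ne.symm hwv)
    have h1 : G.dist w u ≤ G.dist w x + G.dist x u := hG.dist_triangle
    have h2 : G.dist u x ≤ G.dist v u := hm.2 x hx
    have h3 : G.dist x u = G.dist u x := dist_commG G _ _
    have h4 : G.dist x w = G.dist w x := dist_commG G _ _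
    have h5 : G.dist v w = G.dist w v := dist_commG G _ _
    omega
  · left
    by_contra hwu
    obtain ⟨x, hx, hdx⟩ := exists_adj_dist hG (Ne.symm hwu)
    have h1 : G.dist w v ≤ G.dist w x + G.dist x v := hG.dist_triangle
    have h2 : G.dist v x ≤ G.dist u v := hm.1 x hx
    have h3 : G.dist x v = G.dist v x := dist_commG G _ _
    have h4 : G.dist x w = G.dist w x := dist_commG G _ _
    have h5 : G.dist u w = G.dist w u := dist_commG G _ _
    omega

end General
section Product

variable {G : SimpleGraph α} {H : SimpleGraph β}

lemma dist_le_succ_of_adj {γ : Type*} {P : SimpleGraph γ} {x y z : γ} {n : ℕ}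
    (hP : P.Connected) (h : P.Adj x y) (hd : P.dist y z ≤ n) : P.dist x z ≤ n + 1 := by
  have h1 : P.dist x z ≤ P.dist x y + P.dist y z := hP.dist_triangle
  have h2 : P.dist x y ≤ 1 := by
    rw [← SimpleGraph.dist_eq_one_iff_adj] at h; omega
  omega

lemma strongProd_adj_iff {x y : α × β} :
    (strongProd G H).Adj x y ↔
      x ≠ y ∧ (x.1 = y.1 ∨ G.Adj x.1 y.1) ∧ (x.2 = y.2 ∨ H.Adj x.2 y.2) :=
  Iff.rfl

lemma reach_left {a c : α} (hr : G.Reachable a c) (b : β) :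
    (strongProd G H).Reachable (a, b) (c, b) := by
  obtain ⟨w⟩ := hr
  induction w with
  | nil => exact SimpleGraph.Reachable.refl _
  | @cons u x v h q ih =>
    have hadj : (strongProd G H).Adj (u, b) (x, b) :=
      strongProd_adj_iff.mpr ⟨fun he => h.ne (congrArg Prod.fst he), Or.inr h, Or.inl rfl⟩
    exact hadj.reachable.trans ih

lemma reach_right {b d : β} (hr : H.Reachable b d) (a : α) :
    (strongProd G H).Reachable (a, b) (a, d) := by
  obtain ⟨w⟩ := hr
  induction w with
  | nil => exact SimpleGraph.Reachable.refl _
  | @cons u x v h q ih =>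
    have hadj : (strongProd G H).Adj (a, u) (a, x) :=
      strongProd_adj_iff.mpr ⟨fun he => h.ne (congrArg Prod.snd he), Or.inl rfl, Or.inr h⟩
    exact hadj.reachable.trans ih

lemma strongProd_connected (hG : G.Connected) (hH : H.Connected) :
    (strongProd G H).Connected := by
  rw [SimpleGraph.connected_iff]
  refine ⟨?_, ⟨(hG.nonempty.some, hH.nonempty.some)⟩⟩
  rintro ⟨x1, x2⟩ ⟨y1, y2⟩
  exact (reach_left (hG x1 y1) x2).trans (reach_right (hH x2 y2) y1)

lemma dist_strongProd_le (hG : G.Connected) (hH : H.Connected) :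
    ∀ (n : ℕ) (a c : α) (b d : β), G.dist a c ≤ n → H.dist b d ≤ n →
      (strongProd G H).dist (a, b) (c, d) ≤ n := by
  have hP := strongProd_connected (H := H) hG hH
  intro n
  induction n with
  | zero =>
    intro a c b d h1 h2
    have ha : a = c := hG.dist_eq_zero_iff.mp (by omega)
    have hb : b = d := hH.dist_eq_zero_iff.mp (by omega)
    subst ha; subst hb; simp [SimpleGraph.dist_self]
  | succ n ih =>
    intro a c b d h1 h2
    by_cases hac : a = c
    · subst hac
      by_cases hbd : b = d
      · subst hbd; simp [SimpleGraph.dist_self]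
      · obtain ⟨b', hb, hdb⟩ := exists_adj_dist hH hbd
        have hadj : (strongProd G H).Adj (a, b) (a, b') :=
          strongProd_adj_iff.mpr ⟨fun he => hb.ne (congrArg Prod.snd he), Or.inl rfl, Or.inr hb⟩
        exact dist_le_succ_of_adj hP hadj
          (ih a a b' d (by simp [SimpleGraph.dist_self]) (by omega))
    · obtain ⟨a', ha, hda⟩ := exists_adj_dist hG hac
      by_cases hbd : b = d
      · subst hbd
        have hadj : (strongProd G H).Adj (a, b) (a', b) :=
          strongProd_adj_iff.mpr ⟨fun he => ha.ne (congrArg Prod.fst he), Or.inr ha, Or.inl rfl⟩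
        exact dist_le_succ_of_adj hP hadj
          (ih a' c b b (by omega) (by simp [SimpleGraph.dist_self]))
      · obtain ⟨b', hb, hdb⟩ := exists_adj_dist hH hbd
        have hadj : (strongProd G H).Adj (a, b) (a', b') :=
          strongProd_adj_iff.mpr ⟨fun he => ha.ne (congrArg Prod.fst he), Or.inr ha, Or.inr hb⟩
        exact dist_le_succ_of_adj hP hadj
          (ih a' c b' d (by omega) (by omega))

lemma proj_walk (hG : G.Connected) (hH : H.Connected) {x y : α × β}
    (w : (strongProd G H).Walk x y) :
    G.dist x.1 y.1 ≤ w.length ∧ H.dist x.2 y.2 ≤ w.length := by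
  induction w with
  | nil => simp [SimpleGraph.dist_self]
  | @cons u z v h q ih =>
    obtain ⟨-, h1, h2⟩ := strongProd_adj_iff.mp h
    simp only [SimpleGraph.Walk.length_cons]
    constructor
    · have t : G.dist u.1 v.1 ≤ G.dist u.1 z.1 + G.dist z.1 v.1 := hG.dist_triangle
      have e : G.dist u.1 z.1 ≤ 1 := by
        rcases h1 with h1 | h1
        · rw [h1, SimpleGraph.dist_self]; omega
        · rw [← SimpleGraph.dist_eq_one_iff_adj] at h1; omega
      have := ih.1; omega
    · have t : H.dist u.2 v.2 ≤ H.dist u.2 z.2 + H.dist z.2 v.2 := hH.dist_triangle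
      have e : H.dist u.2 z.2 ≤ 1 := by
        rcases h2 with h2 | h2
        · rw [h2, SimpleGraph.dist_self]; omega
        · rw [← SimpleGraph.dist_eq_one_iff_adj] at h2; omega
      have := ih.2; omega

lemma dist_strongProd (hG : G.Connected) (hH : H.Connected) (a c : α) (b d : β) :
    (strongProd G H).dist (a, b) (c, d) = max (G.dist a c) (H.dist b d) := by
  refine le_antisymm
    (dist_strongProd_le hG hH _ a c b d (le_max_left _ _) (le_max_right _ _)) ?_
  obtain ⟨w, hw⟩ := (strongProd_connected hG hH).exists_walk_length_eq_dist (a, b) (c, d)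
  obtain ⟨w1, w2⟩ := proj_walk hG hH w
  rw [hw] at w1 w2
  exact max_le w1 w2

end Product
section Multi

variable {k : ℕ} {p : Fin k → ℕ}

lemma KG_adj {x y : (i : Fin k) × Fin (p i)} :
    (completeMultipartiteGraph (fun i => Fin (p i))).Adj x y ↔ x.1 ≠ y.1 := by
  simp

lemma exists_ne_index (hk : 2 ≤ k) (i : Fin k) : ∃ j : Fin k, j ≠ i := by
  refine ⟨⟨if i.val = 0 then 1 else 0, by split <;> omega⟩, ?_⟩
  intro he
  apply_fun Fin.val at he
  simp only at he
  split at he <;> omega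

lemma KG_connected (hk : 2 ≤ k) (hp : ∀ i, 1 ≤ p i) :
    (completeMultipartiteGraph (fun i => Fin (p i))).Connected := by
  rw [SimpleGraph.connected_iff]
  constructor
  · intro x y
    by_cases hxy : x = y
    · rw [hxy]
    by_cases h : x.1 = y.1
    · obtain ⟨j, hj⟩ := exists_ne_index hk x.1
      have m : (i : Fin k) × Fin (p i) := ⟨j, ⟨0, hp j⟩⟩
      have h1 : (completeMultipartiteGraph (fun i => Fin (p i))).Adj x ⟨j, ⟨0, hp j⟩⟩ :=
        KG_adj.mpr (fun he => hj (he.symm))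
      have h2 : (completeMultipartiteGraph (fun i => Fin (p i))).Adj (⟨j, ⟨0, hp j⟩⟩ :
          (i : Fin k) × Fin (p i)) y := KG_adj.mpr (by rw [← h]; exact hj)
      exact h1.reachable.trans h2.reachable
    · exact (KG_adj.mpr h).reachable
  · exact ⟨⟨⟨0, by omega⟩, ⟨0, hp _⟩⟩⟩

lemma KG_dist_diff (hk : 2 ≤ k) (hp : ∀ i, 1 ≤ p i) {x y : (i : Fin k) × Fin (p i)}
    (h : x.1 ≠ y.1) : (completeMultipartiteGraph (fun i => Fin (p i))).dist x y = 1 :=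
  SimpleGraph.dist_eq_one_iff_adj.mpr (KG_adj.mpr h)

lemma KG_dist_same (hk : 2 ≤ k) (hp : ∀ i, 1 ≤ p i) {x y : (i : Fin k) × Fin (p i)}
    (hne : x ≠ y) (h : x.1 = y.1) :
    (completeMultipartiteGraph (fun i => Fin (p i))).dist x y = 2 := by
  set KG := completeMultipartiteGraph (fun i => Fin (p i)) with hKG
  have hc := KG_connected hk hp
  obtain ⟨j, hj⟩ := exists_ne_index hk x.1
  have h1 : KG.dist x ⟨j, ⟨0, hp j⟩⟩ = 1 := KG_dist_diff hk hp (fun he => hj he.symm)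
  have h2 : KG.dist (⟨j, ⟨0, hp j⟩⟩ : (i : Fin k) × Fin (p i)) y = 1 :=
    KG_dist_diff hk hp (by rw [← h] at *; exact hj)
  have h3 : KG.dist x y ≤ KG.dist x ⟨j, ⟨0, hp j⟩⟩ + KG.dist (⟨j, ⟨0, hp j⟩⟩ :
      (i : Fin k) × Fin (p i)) y := hc.dist_triangle
  have h4 : KG.dist x y ≠ 0 := fun h0 => hne (hc.dist_eq_zero_iff.mp h0)
  have h5 : KG.dist x y ≠ 1 := fun h1 => (SimpleGraph.dist_eq_one_iff_adj.mp h1).ne' (by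
    exact absurd h (KG_adj.mp (SimpleGraph.dist_eq_one_iff_adj.mp h1)))
  omega

lemma KG_dist_le_two (hk : 2 ≤ k) (hp : ∀ i, 1 ≤ p i) (x y : (i : Fin k) × Fin (p i)) :
    (completeMultipartiteGraph (fun i => Fin (p i))).dist x y ≤ 2 := by
  by_cases hxy : x = y
  · rw [hxy, SimpleGraph.dist_self]; omega
  by_cases h : x.1 = y.1
  · rw [KG_dist_same hk hp hxy h]
  · rw [KG_dist_diff hk hp h]; omega

end Multi
section Block

variable {k : ℕ} {p : Fin k → ℕ} {H : SimpleGraph β}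

lemma block_mdf (hk : 2 ≤ k) (hp : ∀ i, 1 ≤ p i) (hH : H.Connected)
    {a c : (i : Fin k) × Fin (p i)} {b d : β}
    (hh : a.1 = c.1) (hbd : b = d ∨ MaximallyDistantFrom H b d)
    (hne : (a, b) ≠ (c, d)) :
    MaximallyDistantFrom (strongProd (completeMultipartiteGraph (fun i => Fin (p i))) H)
      (a, b) (c, d) := by
  have hG := KG_connected hk hp (p := p)
  rintro ⟨x, y⟩ hadj
  obtain ⟨hne', h1, h2⟩ := hadj
  dsimp only at h1 h2
  rw [dist_strongProd hG hH, dist_strongProd hG hH]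
  have e1 : (completeMultipartiteGraph (fun i => Fin (p i))).dist c x ≤ 2 :=
    KG_dist_le_two hk hp c x
  rcases hbd with rfl | hmdf
  · -- b = d, hence a ≠ c
    have hac : a ≠ c := fun he => hne (by rw [he])
    have e2 : (completeMultipartiteGraph (fun i => Fin (p i))).dist a c = 2 :=
      KG_dist_same hk hp hac hh
    have e3 : H.dist b y ≤ 1 := by
      rcases h2 with h2 | h2
      · rw [← h2, SimpleGraph.dist_self]; omega
      · rw [SimpleGraph.dist_eq_one_iff_adj.mpr h2]
    rw [e2]
    exact max_le (le_trans e1 (le_max_left _ _))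
      (le_trans (show H.dist b y ≤ 2 by omega) (le_max_left _ _))
  · refine max_le ?_ ?_
    · by_cases hac : a = c
      · refine le_trans ?_ (le_max_right _ _)
        have hbd' : b ≠ d := fun he => hne (by rw [hac, he])
        have q1 : 1 ≤ H.dist b d := hH.pos_dist_of_ne hbd'
        have e4 : (completeMultipartiteGraph (fun i => Fin (p i))).dist c x ≤ 1 := by
          rcases h1 with h1 | h1
          · rw [← hac, ← h1, SimpleGraph.dist_self]; omega
          · rw [← hac, SimpleGraph.dist_eq_one_iff_adj.mpr h1]
        omega
      · refine le_trans ?_ (le_max_left _ _)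
        rw [KG_dist_same hk hp hac hh]
        exact e1
    · refine le_trans ?_ (le_max_right _ _)
      rcases h2 with h2 | h2
      · rw [← h2, dist_commG H d b]
      · exact hmdf y h2

lemma block_mmd (hk : 2 ≤ k) (hp : ∀ i, 1 ≤ p i) (hH : H.Connected)
    {a c : (i : Fin k) × Fin (p i)} {b d : β}
    (hh : a.1 = c.1) (hbd : b = d ∨ MutuallyMaximallyDistant H b d)
    (hne : (a, b) ≠ (c, d)) :
    MutuallyMaximallyDistant
      (strongProd (completeMultipartiteGraph (fun i => Fin (p i))) H) (a, b) (c, d) :=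
  ⟨block_mdf hk hp hH hh (hbd.imp id And.left) hne,
   block_mdf hk hp hH hh.symm (hbd.imp Eq.symm And.right) (Ne.symm hne)⟩

end Block
section Main

variable [Fintype β] {k : ℕ} {p : Fin k → ℕ} {H : SimpleGraph β}

lemma upper_bound (hk : 2 ≤ k) (hp : ∀ i, 1 ≤ p i)
    (hone : ∀ i j, p i = 1 → p j = 1 → i = j) (hH : H.Connected) :
    sdim (strongProd (completeMultipartiteGraph (fun i => Fin (p i))) H) ≤
      Fintype.card β * ((∑ i, p i) - k) + k * sdim H := by
  classical
  have hG := KG_connected hk hp (p := p)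
  have hP := strongProd_connected (H := H) hG hH
  set r : ∀ i : Fin k, Fin (p i) := fun i => ⟨0, hp i⟩ with hr
  set RR : Finset ((i : Fin k) × Fin (p i)) :=
    Finset.univ.filter (fun a => a.2 = r a.1) with hRRdef
  set SG := RRᶜ with hSGdef
  obtain ⟨W, hWgen, hWcard⟩ := exists_min_generator H
  set U : Finset (((i : Fin k) × Fin (p i)) × β) := SG ×ˢ Finset.univ ∪ RR ×ˢ W with hUdef
  have hcardV : Fintype.card ((i : Fin k) × Fin (p i)) = ∑ i, p i := by
    simp [Fintype.card_sigma]
  have hRR : RR.card = k := by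
    have : RR.card = (Finset.univ : Finset (Fin k)).card := ?_
    · rw [this]; simp
    apply Finset.card_nbij (fun a => a.1)
    · intro a _; exact Finset.mem_univ _
    · rintro ⟨i, x⟩ hx ⟨j, z⟩ hz he
      simp only [Finset.coe_filter, Set.mem_setOf_eq, hRRdef, Finset.mem_univ,
        true_and] at hx hz
      dsimp only at he
      subst he
      simp only [Sigma.mk.inj_iff, heq_eq_eq, true_and]
      rw [hx, hz]
    · intro i _
      exact ⟨⟨i, r i⟩, by simp [hRRdef], rfl⟩
  have hSG : SG.card = (∑ i, p i) - k := by
    rw [hSGdef, Finset.card_compl, hRR, hcardV]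
  have hmemSG : ∀ a : (i : Fin k) × Fin (p i), ¬ a.2 = r a.1 → a ∈ SG := by
    intro a h
    rw [hSGdef, Finset.mem_compl, hRRdef]
    simp only [Finset.mem_filter, Finset.mem_univ, true_and]
    exact h
  have hmemU1 : ∀ (a : (i : Fin k) × Fin (p i)) (b : β), ¬ a.2 = r a.1 → (a, b) ∈ U :=
    fun a b h => Finset.mem_union_left _
      (Finset.mem_product.mpr ⟨hmemSG a h, Finset.mem_univ _⟩)
  have hmemU2 : ∀ (a : (i : Fin k) × Fin (p i)) (b : β), a.2 = r a.1 → b ∈ W →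
      (a, b) ∈ U := by
    intro a b h hb
    refine Finset.mem_union_right _ (Finset.mem_product.mpr ⟨?_, hb⟩)
    rw [hRRdef]
    simp only [Finset.mem_filter, Finset.mem_univ, true_and]
    exact h
  have hdisj : Disjoint (SG ×ˢ (Finset.univ : Finset β)) (RR ×ˢ W) := by
    rw [Finset.disjoint_left]
    intro x hx hx2
    have h1 := (Finset.mem_product.mp hx).1
    have h2 := (Finset.mem_product.mp hx2).1
    rw [hSGdef, Finset.mem_compl] at h1
    exact h1 h2
  have hUcard : U.card = ((∑ i, p i) - k) * Fintype.card β + k * sdim H := by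
    rw [hUdef, Finset.card_union_of_disjoint hdisj, Finset.card_product,
      Finset.card_product, hSG, hRR, hWcard, Finset.card_univ]
  have hUgen : IsStrongMetricGenerator
      (strongProd (completeMultipartiteGraph (fun i => Fin (p i))) H) U := by
    rintro ⟨a, b⟩ ⟨c, d⟩ huv
    by_cases hA : a.2 = r a.1
    swap
    · exact ⟨(a, b), hmemU1 a b hA, Or.inr (by simp [SimpleGraph.dist_self])⟩
    by_cases hC : c.2 = r c.1
    swap
    · exact ⟨(c, d), hmemU1 c d hC, Or.inl (by simp [SimpleGraph.dist_self])⟩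
    have heads : a.1 = c.1 → a = c := by
      rcases a with ⟨i, x⟩; rcases c with ⟨j, z⟩
      intro he
      dsimp only at he hA hC
      subst he
      simp only [Sigma.mk.inj_iff, heq_eq_eq, true_and]
      rw [hA, hC]
    by_cases hbd : b = d
    · subst hbd
      have hac1 : a.1 ≠ c.1 := fun he => huv (by rw [heads he])
      have hbig : 2 ≤ p a.1 ∨ 2 ≤ p c.1 := by
        by_contra hcon
        push_neg at hcon
        have h1 := hp a.1
        have h2 := hp c.1
        exact hac1 (hone a.1 c.1 (by omega) (by omega))
      rcases hbig with h2 | h2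
      · have hx1 : ¬ ((⟨a.1, ⟨1, h2⟩⟩ : (i : Fin k) × Fin (p i)).2 = r a.1) := by
          intro he
          have := congrArg Fin.val he
          simp [hr] at this
        refine ⟨(⟨a.1, ⟨1, h2⟩⟩, b), hmemU1 _ b hx1, Or.inl ?_⟩
        rw [dist_strongProd hG hH, dist_strongProd hG hH, dist_strongProd hG hH]
        have d1 : (completeMultipartiteGraph (fun i => Fin (p i))).dist ⟨a.1, ⟨1, h2⟩⟩ a = 2 := by
          refine KG_dist_same hk hp ?_ rfl
          intro he
          obtain ⟨-, he2⟩ := Sigma.mk.inj_iff.mp he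
          exact hx1 ((eq_of_heq he2).trans hA)
        have d2 : (completeMultipartiteGraph (fun i => Fin (p i))).dist
            (⟨a.1, ⟨1, h2⟩⟩ : (i : Fin k) × Fin (p i)) c = 1 := KG_dist_diff hk hp hac1
        have d3 : (completeMultipartiteGraph (fun i => Fin (p i))).dist c a = 1 :=
          KG_dist_diff hk hp (Ne.symm hac1)
        rw [d1, d2, d3, SimpleGraph.dist_self]
        simp
      · have hx1 : ¬ ((⟨c.1, ⟨1, h2⟩⟩ : (i : Fin k) × Fin (p i)).2 = r c.1) := by
          intro he
          have := congrArg Fin.val he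
          simp [hr] at this
        refine ⟨(⟨c.1, ⟨1, h2⟩⟩, b), hmemU1 _ b hx1, Or.inr ?_⟩
        rw [dist_strongProd hG hH, dist_strongProd hG hH, dist_strongProd hG hH]
        have d1 : (completeMultipartiteGraph (fun i => Fin (p i))).dist ⟨c.1, ⟨1, h2⟩⟩ c = 2 := by
          refine KG_dist_same hk hp ?_ rfl
          intro he
          obtain ⟨-, he2⟩ := Sigma.mk.inj_iff.mp he
          exact hx1 ((eq_of_heq he2).trans hC)
        have d2 : (completeMultipartiteGraph (fun i => Fin (p i))).dist
            (⟨c.1, ⟨1, h2⟩⟩ : (i : Fin k) × Fin (p i)) a = 1 :=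
          KG_dist_diff hk hp (Ne.symm hac1)
        have d3 : (completeMultipartiteGraph (fun i => Fin (p i))).dist a c = 1 :=
          KG_dist_diff hk hp hac1
        rw [d1, d2, d3]
        simp [SimpleGraph.dist_self]
    · obtain ⟨w2, hw2W, hres⟩ := hWgen b d hbd
      have hq : 1 ≤ H.dist b d := hH.pos_dist_of_ne hbd
      have hqc : H.dist d b = H.dist b d := dist_commG H d b
      have hACle : (completeMultipartiteGraph (fun i => Fin (p i))).dist a c ≤ 1 := by
        by_cases he : a = c
        · rw [he, SimpleGraph.dist_self]; omega
        · rw [KG_dist_diff hk hp (fun h => he (heads h))]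
      have hCAle : (completeMultipartiteGraph (fun i => Fin (p i))).dist c a ≤ 1 := by
        rw [dist_commG _ c a]; exact hACle
      rcases hres with h | h
      · refine ⟨(c, w2), hmemU2 c w2 hC hw2W, Or.inl ?_⟩
        rw [dist_strongProd hG hH, dist_strongProd hG hH, dist_strongProd hG hH,
          SimpleGraph.dist_self]
        have m1 : max ((completeMultipartiteGraph (fun i => Fin (p i))).dist c a)
            (H.dist w2 b) = H.dist w2 b := max_eq_right (by omega)
        have m2 : max 0 (H.dist w2 d) = H.dist w2 d := by omega
        have m3 : max ((completeMultipartiteGraph (fun i => Fin (p i))).dist c a)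
            (H.dist d b) = H.dist d b := max_eq_right (by omega)
        rw [m1, m2, m3]
        exact h
      · refine ⟨(a, w2), hmemU2 a w2 hA hw2W, Or.inr ?_⟩
        rw [dist_strongProd hG hH, dist_strongProd hG hH, dist_strongProd hG hH,
          SimpleGraph.dist_self]
        have m1 : max ((completeMultipartiteGraph (fun i => Fin (p i))).dist a c)
            (H.dist w2 d) = H.dist w2 d := max_eq_right (by omega)
        have m2 : max 0 (H.dist w2 b) = H.dist w2 b := by omega
        have m3 : max ((completeMultipartiteGraph (fun i => Fin (p i))).dist a c)
            (H.dist b d) = H.dist b d := max_eq_right (by omega)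
        rw [m1, m2, m3]
        exact h
  calc sdim (strongProd (completeMultipartiteGraph (fun i => Fin (p i))) H) ≤ U.card :=
        sdim_le hUgen
    _ = Fintype.card β * ((∑ i, p i) - k) + k * sdim H := by rw [hUcard, mul_comm]

end Main
lemma lower_bound [Fintype β] {k : ℕ} {p : Fin k → ℕ} {H : SimpleGraph β}
    (hk : 2 ≤ k) (hp : ∀ i, 1 ≤ p i) (hH : H.Connected) :
    Fintype.card β * ((∑ i, p i) - k) + k * sdim H ≤
      sdim (strongProd (completeMultipartiteGraph (fun i => Fin (p i))) H) := by
  classical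
  have hG := KG_connected hk hp (p := p)
  have hP := strongProd_connected (H := H) hG hH
  obtain ⟨S, hSgen, hScard⟩ :=
    exists_min_generator (strongProd (completeMultipartiteGraph (fun i => Fin (p i))) H)
  have key : ∀ u v : ((i : Fin k) × Fin (p i)) × β, u ≠ v →
      MutuallyMaximallyDistant
        (strongProd (completeMultipartiteGraph (fun i => Fin (p i))) H) u v →
      u ∈ S ∨ v ∈ S := by
    intro u v hne hm
    obtain ⟨w, hwS, hr⟩ := hSgen u v hne
    rcases resolver_of_mmd hP hm hr with rfl | rfl
    · exact Or.inl hwS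
    · exact Or.inr hwS
  set T : Finset (((i : Fin k) × Fin (p i)) × β) := Finset.univ \ S with hTdef
  have hTnotS : ∀ x, x ∈ T → x ∉ S := by
    intro x hx
    exact (Finset.mem_sdiff.mp hx).2
  have hTi : ∀ i : Fin k,
      (T.filter (fun x => x.1.1 = i)).card ≤ Fintype.card β - sdim H := by
    intro i
    set Ti := T.filter (fun x : (((i : Fin k) × Fin (p i)) × β) => x.1.1 = i) with hTidef
    have hmemTi : ∀ x ∈ Ti, x ∈ T ∧ x.1.1 = i := by
      intro x hx
      exact Finset.mem_filter.mp hx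
    have hpairs : ∀ x ∈ Ti, ∀ y ∈ Ti, x ≠ y →
        ¬(x.2 = y.2 ∨ MutuallyMaximallyDistant H x.2 y.2) := by
      rintro ⟨a, b⟩ hx ⟨c, d⟩ hy hne hor
      obtain ⟨hxT, hxi⟩ := hmemTi _ hx
      obtain ⟨hyT, hyi⟩ := hmemTi _ hy
      have hmm := block_mmd hk hp hH (hxi.trans hyi.symm) hor hne
      rcases key _ _ hne hmm with h | h
      · exact hTnotS _ hxT h
      · exact hTnotS _ hyT h
    have hinj : Set.InjOn (Prod.snd : ((i : Fin k) × Fin (p i)) × β → β) ↑Ti := by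
      intro x hx y hy he
      by_contra hne
      exact hpairs x (Finset.mem_coe.mp hx) y (Finset.mem_coe.mp hy) hne (Or.inl he)
    set I := Ti.image (Prod.snd : ((i : Fin k) × Fin (p i)) × β → β) with hIdef
    have hIcard : I.card = Ti.card := Finset.card_image_of_injOn hinj
    have hcov : ∀ b d : β, b ≠ d → MutuallyMaximallyDistant H b d →
        b ∈ Finset.univ \ I ∨ d ∈ Finset.univ \ I := by
      intro b d hbd hmm
      by_contra hcon
      push_neg at hcon
      obtain ⟨h1, h2⟩ := hcon
      rw [Finset.mem_sdiff, not_and, not_not] at h1 h2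
      obtain ⟨x, hxTi, hxe⟩ := Finset.mem_image.mp (h1 (Finset.mem_univ _))
      obtain ⟨y, hyTi, hye⟩ := Finset.mem_image.mp (h2 (Finset.mem_univ _))
      have hxy : x ≠ y := by
        intro he
        rw [he, hye] at hxe
        exact hbd hxe.symm
      refine hpairs x hxTi y hyTi hxy (Or.inr ?_)
      rw [hxe, hye]
      exact hmm
    have hsle : sdim H ≤ (Finset.univ \ I).card :=
      sdim_le (cover_generator hH _ hcov)
    have hIun : (Finset.univ \ I).card = Fintype.card β - I.card := by
      rw [Finset.card_sdiff_of_subset (Finset.subset_univ I), Finset.card_univ]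
    have hIle : I.card ≤ Fintype.card β := by
      rw [← Finset.card_univ]
      exact Finset.card_le_card (Finset.subset_univ I)
    omega
  have hsum : T.card = ∑ i : Fin k, (T.filter (fun x => x.1.1 = i)).card :=
    Finset.card_eq_sum_card_fiberwise (fun x _ => Finset.mem_univ _)
  have hTcard : T.card ≤ k * (Fintype.card β - sdim H) := by
    rw [hsum]
    calc ∑ i : Fin k, (T.filter (fun x => x.1.1 = i)).card
        ≤ ∑ _i : Fin k, (Fintype.card β - sdim H) :=
          Finset.sum_le_sum (fun i _ => hTi i)
      _ = k * (Fintype.card β - sdim H) := by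
          rw [Finset.sum_const, Finset.card_univ, Fintype.card_fin, smul_eq_mul]
  have hST : S.card + T.card = (∑ i, p i) * Fintype.card β := by
    have h1 : T.card = (Finset.univ : Finset (((i : Fin k) × Fin (p i)) × β)).card - S.card :=
      by rw [hTdef, Finset.card_sdiff_of_subset (Finset.subset_univ S), Finset.card_univ]
    have h2 : S.card ≤ (Finset.univ : Finset (((i : Fin k) × Fin (p i)) × β)).card :=
      Finset.card_le_card (Finset.subset_univ S)
    have h3 : (Finset.univ : Finset (((i : Fin k) × Fin (p i)) × β)).card =
        (∑ i, p i) * Fintype.card β := by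
      rw [Finset.card_univ, Fintype.card_prod]
      simp [Fintype.card_sigma]
    omega
  have hs2 : sdim H ≤ Fintype.card β := by
    have := sdim_le (univ_generator H)
    rwa [Finset.card_univ] at this
  have hk2 : k ≤ ∑ i, p i := by
    calc k = ∑ _i : Fin k, 1 := by simp
      _ ≤ ∑ i, p i := Finset.sum_le_sum (fun i _ => hp i)
  rw [← hScard]
  have e1 : k * (Fintype.card β - sdim H) + k * sdim H = k * Fintype.card β := by
    rw [← Nat.mul_add, Nat.sub_add_cancel hs2]
  have e2 : ((∑ i, p i) - k) * Fintype.card β + k * Fintype.card β =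
      (∑ i, p i) * Fintype.card β := by
    rw [← Nat.add_mul, Nat.sub_add_cancel hk2]
  have e3 : Fintype.card β * ((∑ i, p i) - k) = ((∑ i, p i) - k) * Fintype.card β :=
    mul_comm _ _
  omega
theorem sdim_strongProd_completeMultipartite [Fintype β] {k : ℕ} (hk : 2 ≤ k)
    (p : Fin k → ℕ) (hp : ∀ i, 1 ≤ p i)
    (hone : ∀ i j, p i = 1 → p j = 1 → i = j)
    (H : SimpleGraph β) (hH : H.Connected) (hHn : Nontrivial β) :
    sdim (strongProd (completeMultipartiteGraph (fun i => Fin (p i))) H) =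
      Fintype.card β * ((∑ i, p i) - k) + (∑ i, p i) * sdim H -
        ((∑ i, p i) - k) * sdim H := by
  have hub := upper_bound hk hp hone hH
  have hlb := lower_bound hk hp hH
  have hk2 : k ≤ ∑ i, p i := by
    calc k = ∑ _i : Fin k, 1 := by simp
      _ ≤ ∑ i, p i := Finset.sum_le_sum (fun i _ => hp i)
  have e1 : ((∑ i, p i) - k) * sdim H + k * sdim H = (∑ i, p i) * sdim H := by
    rw [← Nat.add_mul, Nat.sub_add_cancel hk2]
  omega
end
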